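/- For the Meixner polynomials M_n orthogonal with respect to the geometric law (1−p)p^x on ℕ, the squared norm is ∑_{x=0}^∞ M_n(x)² (1−p) p^x = p^{−n} (1−p)^{2n} (n!)². -/

import Mathlib

open Polynomial Finset

private lemma natL (n j : ℕ) : (n+1)*((n+1).choose j) = j*((n+1).choose j) + (n+1)*(n.choose j) := by
  cases j with
  | zero => simp
  | succ i =>
    have hp : (n+1).choose (i+1) = n.choose i + n.choose (i+1) := Nat.choose_succ_succ n i
    have h : (n+1) * n.choose i = (n+1).choose (i+1) * (i+1) := Nat.add_one_mul_choose_eq n i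
    rw [hp] at h ⊢
    zify at h ⊢
    linear_combination h

private lemma chx (x k : ℕ) : (x:ℝ) * (x.choose k : ℝ)
    = ((k:ℝ)+1) * (x.choose (k+1) : ℝ) + (k:ℝ) * (x.choose k : ℝ) := by
  rcases le_or_gt k x with h | h
  · have h1 := Nat.choose_succ_right_eq x k
    have h2 : ((x.choose (k+1) : ℝ)) * ((k:ℝ)+1) = (x.choose k : ℝ) * ((x:ℝ) - k) := by
      have h3 := congrArg (Nat.cast (R := ℝ)) h1
      push_cast [Nat.cast_sub h] at h3
      linarith [h3]
    nlinarith [h2]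
  · rw [Nat.choose_eq_zero_of_lt h, Nat.choose_eq_zero_of_lt (h.trans (Nat.lt_succ_self k))]
    simp

noncomputable def mG (p : ℝ) (n k : ℕ) : ℝ :=
  (n.factorial : ℝ) * (n.choose k : ℝ) * (1 - p) ^ n * ((p - 1) / p) ^ k

private lemma mG_zero (p : ℝ) {n k : ℕ} (h : n < k) : mG p n k = 0 := by
  simp [mG, Nat.choose_eq_zero_of_lt h]

private lemma mG_coeff (p : ℝ) (hp0 : p ≠ 0) (n k : ℕ) :
    mG p (n+2) k = ((1-p)/p) * ((p-1)*((k:ℝ) * mG p (n+1) (k-1) + (k:ℝ) * mG p (n+1) k)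
      + ((1+p)*((n:ℝ)+1)+p) * mG p (n+1) k - (1-p)*((n:ℝ)+1)^2 * mG p n k) := by
  cases k with
  | zero =>
    simp only [mG, Nat.choose_zero_right, Nat.cast_zero, Nat.factorial_succ, pow_zero]
    push_cast
    field_simp
    ring
  | succ j =>
    have e2 : (((n+1).choose (j+1) : ℕ) : ℝ) = (n.choose j : ℝ) + (n.choose (j+1) : ℝ) := by
      rw [Nat.choose_succ_succ]; push_cast; ring
    have e1 : (((n+2).choose (j+1) : ℕ) : ℝ)
        = ((n+1).choose j : ℝ) + ((n.choose j : ℝ) + (n.choose (j+1) : ℝ)) := by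
      rw [Nat.choose_succ_succ (n+1) j]; push_cast [Nat.choose_succ_succ n j]; ring
    have h3 : ((n:ℝ)+1) * (n.choose j : ℝ)
        = ((j:ℝ)+1) * ((n.choose j : ℝ) + (n.choose (j+1) : ℝ)) := by
      have h := congrArg (Nat.cast (R := ℝ)) (Nat.add_one_mul_choose_eq n j)
      push_cast [Nat.choose_succ_succ n j] at h
      linarith
    have h4 : ((n:ℝ)+1) * ((n+1).choose j : ℝ)
        = (j:ℝ) * ((n+1).choose j : ℝ) + ((n:ℝ)+1) * (n.choose j : ℝ) := by
      have h := congrArg (Nat.cast (R := ℝ)) (natL n j)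
      push_cast at h
      linarith
    simp only [mG, Nat.factorial_succ, Nat.succ_sub_one]
    rw [e1, e2]
    push_cast
    rw [pow_succ (1-p) (n+1), pow_succ (1-p) n, pow_succ ((p-1)/p) j]
    generalize ((p-1)/p)^j = Q
    generalize (1-p)^n = U
    generalize (n.factorial : ℝ) = F
    field_simp
    linear_combination (F*U*(1-p)^2*Q*(p-1)*p) * h4 - (F*U*(1-p)^2*Q*(p-1)*(1-p)) * h3

/-- The Meixner polynomials associated with the geometric distribution
`μ(x) = (1−p)p^x` on `ℕ`: `M₀ = 1`, `M₁` determined by the recurrence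
`(p/(1−p)) M_{n+1}(x) = ((p−1)x + (1+p)n + p) M_n(x) − (1−p) n² M_{n−1}(x)`. -/
noncomputable def meixner (p : ℝ) : ℕ → Polynomial ℝ
  | 0 => 1
  | 1 => C ((1 - p) / p) * (C (p - 1) * X + C p)
  | (n + 2) =>
      C ((1 - p) / p) *
        ((C (p - 1) * X + C ((1 + p) * ((n : ℝ) + 1) + p)) * meixner p (n + 1)
          - C ((1 - p) * ((n : ℝ) + 1) ^ 2) * meixner p n)

private lemma meixner_eval (p : ℝ) (hp0 : p ≠ 0) : ∀ (n : ℕ) (x : ℕ),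
    (meixner p n).eval (x:ℝ) = ∑ k ∈ Finset.range (n+1), mG p n k * (x.choose k : ℝ)
  | 0, x => by simp [meixner, mG]
  | 1, x => by
      rw [show meixner p 1 = C ((1 - p) / p) * (C (p - 1) * X + C p) from rfl]
      simp [mG, Finset.sum_range_succ]
      field_simp
      ring
  | (n+2), x => by
      have ih1 := meixner_eval p hp0 (n+1) x
      have ih0 := meixner_eval p hp0 n x
      rw [show meixner p (n+2) = C ((1 - p) / p) *
        ((C (p - 1) * X + C ((1 + p) * ((n : ℝ) + 1) + p)) * meixner p (n + 1)
          - C ((1 - p) * ((n : ℝ) + 1) ^ 2) * meixner p n) from rfl]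
      simp only [eval_mul, eval_add, eval_sub, eval_C, eval_X]
      rw [ih1, ih0]
      rw [show ∑ k ∈ Finset.range (n+2), mG p (n+1) k * (x.choose k : ℝ)
            = ∑ k ∈ Finset.range (n+3), mG p (n+1) k * (x.choose k : ℝ) from
          Finset.sum_subset (Finset.range_subset_range.2 (by omega)) (by
            intro k _ hk
            rw [mG_zero p (by simp at hk ⊢; omega)]
            ring)]
      rw [show ∑ k ∈ Finset.range (n+1), mG p n k * (x.choose k : ℝ)
            = ∑ k ∈ Finset.range (n+3), mG p n k * (x.choose k : ℝ) from
          Finset.sum_subset (Finset.range_subset_range.2 (by omega)) (by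
            intro k _ hk
            rw [mG_zero p (by simp at hk ⊢; omega)]
            ring)]
      have hxS : ((p-1) * (x:ℝ) + ((1 + p) * ((n:ℝ) + 1) + p)) *
            ∑ k ∈ Finset.range (n+3), mG p (n+1) k * (x.choose k : ℝ)
          = ∑ k ∈ Finset.range (n+3),
              ((p-1)*((k:ℝ) * mG p (n+1) (k-1) + (k:ℝ) * mG p (n+1) k)
                + ((1 + p) * ((n:ℝ) + 1) + p) * mG p (n+1) k) * (x.choose k : ℝ) := by
        have hshift : ∑ k ∈ Finset.range (n+3), mG p (n+1) k * (((k:ℝ)+1) * (x.choose (k+1) : ℝ))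
            = ∑ k ∈ Finset.range (n+3), ((k:ℝ) * mG p (n+1) (k-1)) * (x.choose k : ℝ) := by
          have h4 : ∑ k ∈ Finset.range (n+4), ((k:ℝ) * mG p (n+1) (k-1)) * (x.choose k : ℝ)
              = ∑ k ∈ Finset.range (n+3), mG p (n+1) k * (((k:ℝ)+1) * (x.choose (k+1) : ℝ)) := by
            rw [Finset.sum_range_succ' (fun k => ((k:ℝ) * mG p (n+1) (k-1)) * (x.choose k : ℝ)) (n+3)]
            simp only [Nat.cast_zero, zero_mul, mul_zero, add_zero, Nat.add_sub_cancel]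
            apply Finset.sum_congr rfl
            intro k _
            push_cast
            ring
          rw [← h4, Finset.sum_range_succ,
            show mG p (n+1) (n+3-1) = 0 from mG_zero p (by omega)]
          simp
        rw [Finset.mul_sum]
        calc ∑ k ∈ Finset.range (n+3),
              ((p-1) * (x:ℝ) + ((1 + p) * ((n:ℝ) + 1) + p)) * (mG p (n+1) k * (x.choose k : ℝ))
            = ∑ k ∈ Finset.range (n+3),
              ((p-1) * (mG p (n+1) k * (((k:ℝ)+1) * (x.choose (k+1) : ℝ)))
                + ((p-1)*(k:ℝ) + ((1 + p) * ((n:ℝ) + 1) + p)) * mG p (n+1) k * (x.choose k : ℝ)) := by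
              apply Finset.sum_congr rfl
              intro k _
              linear_combination ((p-1) * mG p (n+1) k) * chx x k
          _ = (p-1) * (∑ k ∈ Finset.range (n+3), mG p (n+1) k * (((k:ℝ)+1) * (x.choose (k+1) : ℝ)))
                + ∑ k ∈ Finset.range (n+3),
                  ((p-1)*(k:ℝ) + ((1 + p) * ((n:ℝ) + 1) + p)) * mG p (n+1) k * (x.choose k : ℝ) := by
              rw [Finset.sum_add_distrib, Finset.mul_sum]
          _ = ∑ k ∈ Finset.range (n+3),
              ((p-1)*((k:ℝ) * mG p (n+1) (k-1) + (k:ℝ) * mG p (n+1) k)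
                + ((1 + p) * ((n:ℝ) + 1) + p) * mG p (n+1) k) * (x.choose k : ℝ) := by
              rw [hshift, Finset.mul_sum, ← Finset.sum_add_distrib]
              apply Finset.sum_congr rfl
              intro k _
              ring
      rw [hxS, Finset.mul_sum, ← Finset.sum_sub_distrib, Finset.mul_sum]
      apply Finset.sum_congr rfl
      intro k _
      rw [mG_coeff p hp0 n k]
      ring

private lemma summable_choose_geom (p : ℝ) (hp0 : 0 ≤ p) (hp1 : p < 1) (M : ℕ) :
    Summable (fun x : ℕ => (x.choose M : ℝ) * p ^ x) := by
  apply Summable.of_nonneg_of_le (fun x => by positivity) (fun x => ?_)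
    (summable_pow_mul_geometric_of_norm_lt_one M
      (by rwa [Real.norm_eq_abs, abs_of_nonneg hp0]))
  apply mul_le_mul_of_nonneg_right _ (pow_nonneg hp0 x)
  exact_mod_cast Nat.choose_le_pow x M

private lemma hasSum_choose (p : ℝ) (hp0 : 0 < p) (hp1 : p < 1) (N : ℕ) :
    HasSum (fun x : ℕ => (x.choose N : ℝ) * p ^ x) (p ^ N / (1 - p) ^ (N + 1)) := by
  have hu : (1:ℝ) - p ≠ 0 := by linarith
  induction N with
  | zero =>
      have h := hasSum_geometric_of_lt_one hp0.le hp1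
      rw [show (p:ℝ)^0/(1-p)^(0+1) = (1-p)⁻¹ by rw [pow_zero, pow_one, one_div]]
      simpa using h
  | succ N ih =>
      have hs := summable_choose_geom p hp0.le hp1 (N+1)
      have hGS : HasSum (fun x : ℕ => (x.choose (N+1) : ℝ) * p ^ x)
          (∑' x : ℕ, (x.choose (N+1) : ℝ) * p ^ x) := hs.hasSum
      set S := ∑' x : ℕ, (x.choose (N+1) : ℝ) * p ^ x with hS
      have h1 : HasSum (fun x : ℕ => (((x+1).choose (N+1) : ℝ)) * p ^ (x+1))
          (S - ∑ i ∈ Finset.range 1, ((i.choose (N+1) : ℝ) * p ^ i)) :=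
        (hasSum_nat_add_iff' 1).mpr hGS
      have h2 : HasSum (fun x : ℕ => p * ((x.choose N : ℝ) * p ^ x)
            + p * ((x.choose (N+1) : ℝ) * p ^ x))
          (p * (p ^ N / (1 - p) ^ (N + 1)) + p * S) := (ih.mul_left p).add (hGS.mul_left p)
      have heq : (fun x : ℕ => (((x+1).choose (N+1) : ℝ)) * p ^ (x+1))
          = fun x : ℕ => p * ((x.choose N : ℝ) * p ^ x) + p * ((x.choose (N+1) : ℝ) * p ^ x) := by
        funext x
        rw [Nat.choose_succ_succ]
        push_cast
        ring
      rw [heq] at h1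
      have key := h1.unique h2
      simp only [Finset.sum_range_one, Nat.choose_zero_right] at key
      norm_num at key
      have hSval : S = p ^ (N+1) / (1 - p) ^ (N + 2) := by
        have h3 : S * (1 - p) = p * (p ^ N / (1 - p) ^ (N + 1)) := by linarith
        field_simp at h3 ⊢
        linear_combination h3
      rw [← hSval]
      exact hGS

noncomputable def mV (p : ℝ) (n k : ℕ) : ℝ :=
  (-1)^n * (n.factorial : ℝ) * (k.choose n : ℝ) * (1-p)^n * p^k / (p^n * (1-p)^(k+1))

private lemma mV_rec (p : ℝ) (hp0 : 0 < p) (hp1 : p < 1) (n k : ℕ) :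
    mV p (n+2) k
      = (((1-p)/p)*(p-1)*((k:ℝ)+1)) * mV p (n+1) (k+1)
      + (((1-p)/p)*((p-1)*(k:ℝ) + ((1+p)*((n:ℝ)+1)+p))) * mV p (n+1) k
      + (-((1-p)/p)*((1-p)*((n:ℝ)+1)^2)) * mV p n k := by
  have hu : (1:ℝ) - p ≠ 0 := by linarith
  have hp : p ≠ 0 := hp0.ne'
  have H2 : ((n:ℝ)+2) * ((k.choose (n+1) : ℝ) + (k.choose (n+2) : ℝ))
      = ((k:ℝ)+1) * (k.choose (n+1) : ℝ) := by
    have h := congrArg (Nat.cast (R := ℝ)) (Nat.add_one_mul_choose_eq k (n+1))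
    push_cast [Nat.choose_succ_succ k (n+1)] at h
    linarith
  have H3 : ((k:ℝ)+1) * (k.choose n : ℝ)
      = ((n:ℝ)+1) * ((k.choose n : ℝ) + (k.choose (n+1) : ℝ)) := by
    have h := congrArg (Nat.cast (R := ℝ)) (Nat.add_one_mul_choose_eq k n)
    push_cast [Nat.choose_succ_succ k n] at h
    linarith
  have key : ((n:ℝ)+2) * (k.choose (n+2) : ℝ)
      = p*((k:ℝ)+1)*((k.choose n : ℝ) + (k.choose (n+1) : ℝ))
        + (1-p)*(k:ℝ)*(k.choose (n+1) : ℝ)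
        - ((1+p)*((n:ℝ)+1)+p)*(k.choose (n+1) : ℝ)
        - ((n:ℝ)+1)*p*(k.choose n : ℝ) := by
    linear_combination H2 - p * H3
  have hE : (((k+1).choose (n+1) : ℕ) : ℝ) = (k.choose n : ℝ) + (k.choose (n+1) : ℝ) := by
    rw [Nat.choose_succ_succ]; push_cast; ring
  have hPN : p^n ≠ 0 := pow_ne_zero _ hp
  have hUK : (1-p)^(k+1) ≠ 0 := pow_ne_zero _ hu
  simp only [mV, Nat.factorial_succ]
  rw [hE]
  push_cast
  rw [show p^(k+1) = p^k * p from pow_succ p k,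
      show p^(n+2) = p^n * p * p by rw [pow_succ, pow_succ],
      show p^(n+1) = p^n * p from pow_succ p n,
      show (1-p)^(k+1+1) = (1-p)^(k+1) * (1-p) from pow_succ (1-p) (k+1),
      show (1-p)^(n+2) = (1-p)^n * (1-p) * (1-p) by rw [pow_succ, pow_succ],
      show (1-p)^(n+1) = (1-p)^n * (1-p) from pow_succ (1-p) n,
      show ((-1:ℝ))^(n+2) = (-1)^n * (-1) * (-1) by rw [pow_succ, pow_succ],
      show ((-1:ℝ))^(n+1) = (-1)^n * (-1) from pow_succ (-1) n]
  generalize p^k = PK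
  generalize hg1 : p^n = PN at hPN ⊢
  generalize hg2 : (1-p)^(k+1) = UK at hUK ⊢
  generalize (1-p)^n = UN
  generalize ((-1:ℝ))^n = SG
  field_simp
  linear_combination (SG * UN * PK * (1-p)) * key

private lemma hasSum_mV (p : ℝ) (hp0 : 0 < p) (hp1 : p < 1) : ∀ (n k : ℕ),
    HasSum (fun x : ℕ => (x.choose k : ℝ) * (meixner p n).eval (x:ℝ) * p^x) (mV p n k)
  | 0, k => by
      have h := hasSum_choose p hp0 hp1 k
      have hv : mV p 0 k = p^k / (1-p)^(k+1) := by simp [mV]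
      rw [hv, show meixner p 0 = 1 from rfl]
      simpa using h
  | 1, k => by
      have h := ((hasSum_choose p hp0 hp1 (k+1)).mul_left (((1-p)/p)*(p-1)*((k:ℝ)+1))).add
        ((hasSum_choose p hp0 hp1 k).mul_left (((1-p)/p)*((p-1)*(k:ℝ) + p)))
      convert h using 1
      · rfl
      · funext x
        rw [show meixner p 1 = C ((1 - p) / p) * (C (p - 1) * X + C p) from rfl]
        simp only [eval_mul, eval_add, eval_C, eval_X]
        linear_combination (((1-p)/p)*(p-1)*(p^x:ℝ)) * chx x k
      · have hu : (1:ℝ) - p ≠ 0 := by linarith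
        have hp : p ≠ 0 := hp0.ne'
        have hUK : (1-p)^(k+1) ≠ 0 := pow_ne_zero _ hu
        simp only [mV, Nat.choose_one_right, pow_one, pow_zero]
        rw [show p^(k+1) = p^k * p from pow_succ p k,
            show (1-p)^(k+1+1) = (1-p)^(k+1) * (1-p) from pow_succ (1-p) (k+1)]
        generalize p^k = PK
        generalize hg2 : (1-p)^(k+1) = UK at hUK ⊢
        field_simp
        ring
  | (n+2), k => by
      have h1 := hasSum_mV p hp0 hp1 (n+1) (k+1)
      have h2 := hasSum_mV p hp0 hp1 (n+1) k
      have h0 := hasSum_mV p hp0 hp1 n k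
      have H := ((h1.mul_left (((1-p)/p)*(p-1)*((k:ℝ)+1))).add
        (h2.mul_left (((1-p)/p)*((p-1)*(k:ℝ) + ((1+p)*((n:ℝ)+1)+p))))).add
        (h0.mul_left (-((1-p)/p)*((1-p)*((n:ℝ)+1)^2)))
      rw [mV_rec p hp0 hp1 n k]
      convert H using 1
      · rfl
      funext x
      rw [show meixner p (n+2) = C ((1 - p) / p) *
        ((C (p - 1) * X + C ((1 + p) * ((n : ℝ) + 1) + p)) * meixner p (n + 1)
          - C ((1 - p) * ((n : ℝ) + 1) ^ 2) * meixner p n) from rfl]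
      simp only [eval_mul, eval_add, eval_sub, eval_C, eval_X]
      linear_combination (((1-p)/p)*(p-1)*((meixner p (n+1)).eval (x:ℝ))*(p^x:ℝ)) * chx x k

/-- The squared norm of the Meixner polynomials with respect to the geometric
law `(1−p)p^x` on `ℕ`: `∑_{x=0}^∞ M_n(x)² (1−p) p^x = p^{−n} (1−p)^{2n} (n!)²`. -/
theorem meixner_norm_sq (p : ℝ) (hp0 : 0 < p) (hp1 : p < 1) (n : ℕ) :
    ∑' x : ℕ, (meixner p n).eval (x : ℝ) ^ 2 * (1 - p) * p ^ x
      = (1 - p) ^ (2 * n) * (n.factorial : ℝ) ^ 2 / p ^ n := by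
  have hu : (1:ℝ) - p ≠ 0 := by linarith
  have hp : p ≠ 0 := hp0.ne'
  have hform : (fun x : ℕ => (meixner p n).eval (x:ℝ) ^ 2 * (1 - p) * p ^ x)
      = fun x : ℕ => ∑ k ∈ Finset.range (n+1),
          ((1-p) * mG p n k) * ((x.choose k : ℝ) * (meixner p n).eval (x:ℝ) * p ^ x) := by
    funext x
    nth_rewrite 1 [sq]
    nth_rewrite 1 [meixner_eval p hp n x]
    rw [Finset.sum_mul, Finset.sum_mul, Finset.sum_mul]
    apply Finset.sum_congr rfl
    intro k _
    ring
  have H : HasSum (fun x : ℕ => (meixner p n).eval (x:ℝ) ^ 2 * (1 - p) * p ^ x)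
      (∑ k ∈ Finset.range (n+1), ((1-p) * mG p n k) * mV p n k) := by
    rw [hform]
    exact hasSum_sum (fun k _ => (hasSum_mV p hp0 hp1 n k).mul_left ((1-p) * mG p n k))
  rw [H.tsum_eq]
  rw [Finset.sum_eq_single_of_mem n (Finset.self_mem_range_succ n) (fun k hk hkn => by
    have hlt : k < n := by
      have := Finset.mem_range.1 hk
      omega
    simp [mV, Nat.choose_eq_zero_of_lt hlt])]
  simp only [mG, mV, Nat.choose_self, Nat.cast_one]
  have hq : ((p-1):ℝ)^n * (-1:ℝ)^n = (1-p)^n := by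
    rw [← mul_pow, show ((p-1):ℝ) * (-1) = 1-p by ring]
  have hPN : p^n ≠ 0 := pow_ne_zero _ hp
  have hUN : (1-p)^n ≠ 0 := pow_ne_zero _ hu
  rw [div_pow, show (1-p)^(n+1) = (1-p)^n * (1-p) from pow_succ (1-p) n, two_mul, pow_add]
  field_simp
  linear_combination hq
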